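/- Clause addition via abstraction: let Ψ = Π : φ be a DQBF, C a compatible clause, and V' = dep(C). If abs(Π : φ ∧ ¬C, V') is unsatisfiable, then abs(Π : φ, V') ≡ abs(Π : φ ∧ C, V'), and consequently Π : φ ≡ Π : φ ∧ C. -/

import Mathlib

/- Formalization of DQBF (dependency quantified Boolean formulas),
   Skolem-function semantics, abstraction, and clause operations. -/

attribute [local instance] Classical.propDecidable

namespace DQBFPaper

/-- An assignment of Boolean values to the variables. -/
abbrev Assignment (V : Type) := V → Bool

/-- A DQBF over variables `V`: the variables in `exVars` are existential
    (with dependency sets given by `dep`), the others are universal;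
    `matrix` is the quantifier-free part. -/
structure DQBF (V : Type) where
  exVars : Set V
  dep : V → Set V
  matrix : Assignment V → Prop

/-- A literal: a variable together with a polarity (`true` = positive). -/
abbrev Lit (V : Type) := V × Bool

/-- Evaluation of a literal under an assignment. -/
def Lit.eval {V : Type} (a : Assignment V) (l : Lit V) : Bool :=
  if l.2 then a l.1 else !a l.1

/-- Negation of a literal. -/
def Lit.neg {V : Type} (l : Lit V) : Lit V := (l.1, !l.2)

/-- A clause: a set of literals (interpreted disjunctively). -/
abbrev Clause (V : Type) := Set (Lit V)

/-- A clause is true iff some literal in it is true. -/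
def Clause.eval {V : Type} (a : Assignment V) (C : Clause V) : Prop :=
  ∃ l ∈ C, Lit.eval a l = true

/-- A clause is non-tautological if no variable occurs with both polarities. -/
def NonTaut {V : Type} (C : Clause V) : Prop :=
  ∀ v : V, ¬((v, true) ∈ C ∧ (v, false) ∈ C)

namespace DQBF

variable {V : Type}

/-- The universal variables of a DQBF. -/
def univVars (Ψ : DQBF V) : Set V := Ψ.exVarsᶜ

/-- Well-formedness: dependency sets of existential variables consist of
    universal variables only. -/
def WellFormed (Ψ : DQBF V) : Prop :=
  ∀ y ∈ Ψ.exVars, Ψ.dep y ⊆ Ψ.exVarsᶜ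

/-- Substituting candidate Skolem functions `s` for the existential variables,
    given an assignment `a` of the universal variables. -/
noncomputable def subst (Ψ : DQBF V) (s : V → Assignment V → Bool)
    (a : Assignment V) : Assignment V :=
  fun v => if v ∈ Ψ.exVars then s v a else a v

/-- `s` respects the dependency sets: the value of each existential variable
    only depends on the assignment of its dependency set. -/
def Respects (Ψ : DQBF V) (s : V → Assignment V → Bool) : Prop :=
  ∀ y ∈ Ψ.exVars, ∀ a b : Assignment V, (∀ x ∈ Ψ.dep y, a x = b x) → s y a = s y b

/-- `s` is a Skolem function for `Ψ`: it respects the dependencies and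
    substituting it turns the matrix into a tautology. -/
def IsSkolem (Ψ : DQBF V) (s : V → Assignment V → Bool) : Prop :=
  Ψ.Respects s ∧ ∀ a : Assignment V, Ψ.matrix (Ψ.subst s a)

/-- A DQBF is satisfiable iff it has a Skolem function. -/
def Satisfiable (Ψ : DQBF V) : Prop := ∃ s, Ψ.IsSkolem s

/-- Two DQBFs (over the same prefix) are equivalent iff they have exactly the
    same Skolem functions. -/
def Equivalent (Ψ₁ Ψ₂ : DQBF V) : Prop := ∀ s, Ψ₁.IsSkolem s ↔ Ψ₂.IsSkolem s

/-- Equi-satisfiability. -/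
def EquiSat (Ψ₁ Ψ₂ : DQBF V) : Prop := Ψ₁.Satisfiable ↔ Ψ₂.Satisfiable

/-- Abstraction w.r.t. a set `V'` of universal variables: each variable of `V'`
    becomes existential with empty dependency set (and is removed from all
    dependency sets); the matrix is unchanged. -/
noncomputable def abst (Ψ : DQBF V) (V' : Set V) : DQBF V where
  exVars := Ψ.exVars ∪ V'
  dep := fun v => if v ∈ V' then ∅ else Ψ.dep v \ V'
  matrix := Ψ.matrix

/-- Conjoin a clause to the matrix. -/
def addClause (Ψ : DQBF V) (C : Clause V) : DQBF V :=
  { Ψ with matrix := fun a => Ψ.matrix a ∧ Clause.eval a C }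

/-- Conjoin the negation of a clause (i.e. the unit clauses negating each of
    its literals) to the matrix. -/
def addNegClause (Ψ : DQBF V) (C : Clause V) : DQBF V :=
  { Ψ with matrix := fun a => Ψ.matrix a ∧ ∀ l ∈ C, Lit.eval a l = false }

/-- Generalized dependencies: `dep v = {v}` for universal `v`,
    `dep v = D_v` for existential `v`. -/
noncomputable def depVar (Ψ : DQBF V) (v : V) : Set V :=
  if v ∈ Ψ.exVars then Ψ.dep v else {v}

/-- Dependencies of a literal. -/
noncomputable def depLit (Ψ : DQBF V) (l : Lit V) : Set V := Ψ.depVar l.1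

/-- Dependencies of a clause. -/
noncomputable def depClause (Ψ : DQBF V) (C : Clause V) : Set V :=
  ⋃ l ∈ C, Ψ.depLit l

/-- Under the Skolem candidate `s`, the literal `l` is constantly true,
    i.e. true for every assignment of the universal variables. -/
noncomputable def ConstTrue (Ψ : DQBF V) (s : V → Assignment V → Bool)
    (l : Lit V) : Prop :=
  ∀ a : Assignment V, Lit.eval (Ψ.subst s a) l = true

/-- A DQBF with a CNF matrix given by a set of clauses. -/
def mkCNF (exVars : Set V) (dep : V → Set V) (φ : Set (Clause V)) : DQBF V :=
  ⟨exVars, dep, fun a => ∀ C ∈ φ, Clause.eval a C⟩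

/-- Universal reduction of a clause: remove every universal literal on which
    no existential literal of the clause depends. -/
def urClause (Ψ : DQBF V) (C : Clause V) : Clause V :=
  C \ {l | l.1 ∉ Ψ.exVars ∧ ∀ k ∈ C, k.1 ∈ Ψ.exVars → l.1 ∉ Ψ.dep k.1}

/-- Outer variables of an existential variable `v`. -/
noncomputable def ovEx (Ψ : DQBF V) (v : V) : Set V :=
  {w | Ψ.depVar w ⊆ Ψ.depVar v}

/-- The kernel of a universal variable `v`. -/
def kernel (Ψ : DQBF V) (v : V) : Set V :=
  ⋂ y ∈ {y | y ∈ Ψ.exVars ∧ v ∈ Ψ.dep y}, Ψ.dep y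

/-- Outer variables of a universal variable `v`. -/
def ovUniv (Ψ : DQBF V) (v : V) : Set V :=
  Ψ.kernel v ∪ {y | y ∈ Ψ.exVars ∧ v ∉ Ψ.dep y ∧ Ψ.dep y ⊆ Ψ.kernel v}

/-- The outer clause of `D` w.r.t. a set of outer variables. -/
def OC (D : Clause V) (OV : Set V) : Clause V := {k ∈ D | k.1 ∈ OV}

/-- Outer resolvent for an existential pivot literal `l ∈ C`. -/
noncomputable def orEx (Ψ : DQBF V) (C D : Clause V) (l : Lit V) : Clause V :=
  C ∪ (OC D (Ψ.ovEx l.1) \ {Lit.neg l})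

/-- Outer resolvent for a universal pivot literal `l ∈ C`. -/
def orUniv (Ψ : DQBF V) (C D : Clause V) (l : Lit V) : Clause V :=
  (C \ {l}) ∪ OC D (Ψ.ovUniv l.1)

/-- Outer resolvent (case split on the quantifier type of the pivot). -/
noncomputable def orRes (Ψ : DQBF V) (C D : Clause V) (l : Lit V) : Clause V :=
  if l.1 ∈ Ψ.exVars then Ψ.orEx C D l else Ψ.orUniv C D l

end DQBF

end DQBFPaper

namespace DQBFPaper
open DQBF

section Aux

variable {V : Type}

lemma lit_eval_congr {a b : Assignment V} {l : Lit V} (hab : a l.1 = b l.1) :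
    Lit.eval a l = Lit.eval b l := by
  simp [Lit.eval, hab]

lemma subst_mem {Ψ : DQBF V} {v : V} (hv : v ∈ Ψ.exVars)
    (s : V → Assignment V → Bool) (a : Assignment V) :
    Ψ.subst s a v = s v a := by
  unfold DQBF.subst
  exact if_pos hv

lemma subst_not_mem {Ψ : DQBF V} {v : V} (hv : v ∉ Ψ.exVars)
    (s : V → Assignment V → Bool) (a : Assignment V) :
    Ψ.subst s a v = a v := by
  unfold DQBF.subst
  exact if_neg hv

lemma abst_dep_elim {Ψ : DQBF V} {V' : Set V} {v x : V}
    (hx : x ∈ (Ψ.abst V').dep v) :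
    v ∉ V' ∧ x ∈ Ψ.dep v ∧ x ∉ V' := by
  have hx' : x ∈ (if v ∈ V' then (∅ : Set V) else Ψ.dep v \ V') := hx
  split at hx'
  · exact absurd hx' (Set.notMem_empty x)
  · exact ⟨‹_›, hx'.1, hx'.2⟩

lemma depClause_univ {Ψ : DQBF V} (hwf : Ψ.WellFormed) {C : Clause V} :
    Ψ.depClause C ⊆ Ψ.exVarsᶜ := by
  intro v hv
  simp only [DQBF.depClause, Set.mem_iUnion] at hv
  obtain ⟨l, hl, hv⟩ := hv
  unfold DQBF.depLit DQBF.depVar at hv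
  split at hv
  · exact hwf _ ‹_› hv
  · simp only [Set.mem_singleton_iff] at hv; subst hv; exact ‹_›

lemma lit_var_cases {Ψ : DQBF V} {C : Clause V} {l : Lit V} (hl : l ∈ C) :
    (l.1 ∉ Ψ.exVars ∧ l.1 ∈ Ψ.depClause C) ∨
    (l.1 ∈ Ψ.exVars ∧ Ψ.dep l.1 ⊆ Ψ.depClause C) := by
  have hsub : Ψ.depLit l ⊆ Ψ.depClause C := by
    intro x hx
    exact Set.mem_biUnion hl hx
  unfold DQBF.depLit DQBF.depVar at hsub
  by_cases hx : l.1 ∈ Ψ.exVars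
  · right; exact ⟨hx, by simpa [hx] using hsub⟩
  · left
    refine ⟨hx, ?_⟩
    simp only [if_neg hx] at hsub
    exact hsub rfl

/-- If there is a family of assignments `g b` that satisfy the matrix,
falsify every literal of `C`, agree with `b` outside the abstracted
existential variables, and depend only on the abstracted dependency sets,
then the abstraction of `Π : φ ∧ ¬C` is satisfiable. -/
lemma sat_of_good (Ψ : DQBF V) (C : Clause V) (V' : Set V)
    (g : Assignment V → Assignment V)
    (h1 : ∀ b, Ψ.matrix (g b))
    (h2 : ∀ b, ∀ l ∈ C, Lit.eval (g b) l = false)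
    (h3 : ∀ b v, v ∉ Ψ.exVars ∪ V' → g b v = b v)
    (h4 : ∀ v ∈ Ψ.exVars ∪ V', ∀ b b' : Assignment V,
      (∀ x ∈ ((Ψ.addNegClause C).abst V').dep v, b x = b' x) →
      g b v = g b' v) :
    ((Ψ.addNegClause C).abst V').Satisfiable := by
  refine ⟨fun v b => g b v, ?_, ?_⟩
  · intro y hy a b hab
    exact h4 y hy a b hab
  · intro a
    have hsub : ((Ψ.addNegClause C).abst V').subst (fun v b => g b v) a = g a := by
      funext v
      by_cases hv : v ∈ ((Ψ.addNegClause C).abst V').exVars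
      · rw [subst_mem hv]
      · rw [subst_not_mem hv]
        exact (h3 a v hv).symm
    rw [hsub]
    exact ⟨h1 a, h2 a⟩

end Aux

/-- Clause addition via abstraction: with `V' = dep(C)`, if
`abs(Π : φ ∧ ¬C, V')` is unsatisfiable, then
`abs(Π : φ, V') ≡ abs(Π : φ ∧ C, V')`, and consequently `Π : φ ≡ Π : φ ∧ C`. -/
theorem add_clause_via_abst {V : Type} (Ψ : DQBF V) (C : Clause V)
    (hwf : Ψ.WellFormed)
    (h : ¬ ((Ψ.addNegClause C).abst (Ψ.depClause C)).Satisfiable) :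
    (Ψ.abst (Ψ.depClause C)).Equivalent
      ((Ψ.addClause C).abst (Ψ.depClause C)) ∧
    Ψ.Equivalent (Ψ.addClause C) := by
  set V' := Ψ.depClause C with hV'
  have hVu : ∀ v ∈ V', v ∉ Ψ.exVars := fun v hv => depClause_univ hwf hv
  -- Part 1: any Skolem function of the abstraction of Ψ makes C constantly true
  have star1 : ∀ s, (Ψ.abst V').IsSkolem s →
      ∀ a, Clause.eval ((Ψ.abst V').subst s a) C := by
    intro s hs a
    by_contra hC
    have hfalse : ∀ l ∈ C, Lit.eval ((Ψ.abst V').subst s a) l = false := by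
      intro l hl
      rcases Bool.eq_false_or_eq_true (Lit.eval ((Ψ.abst V').subst s a) l) with h' | h'
      · exact absurd ⟨l, hl, h'⟩ hC
      · exact h'
    set patch : Assignment V → Assignment V :=
      fun b x => if x ∈ V' then a x else b x with hpatch
    apply h
    refine sat_of_good Ψ C V' (fun b => (Ψ.abst V').subst s (patch b)) ?_ ?_ ?_ ?_
    · intro b
      exact hs.2 (patch b)
    · intro b l hl
      have hmem : l.1 ∈ (Ψ.abst V').exVars := by
        rcases lit_var_cases hl with ⟨_, hv⟩ | ⟨hv, _⟩
        · exact Or.inr hv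
        · exact Or.inl hv
      have hkey : (Ψ.abst V').subst s (patch b) l.1 = (Ψ.abst V').subst s a l.1 := by
        rw [subst_mem hmem, subst_mem hmem]
        refine hs.1 l.1 hmem (patch b) a ?_
        intro x hx
        obtain ⟨hlV', hxdep, hxV'⟩ := abst_dep_elim hx
        rcases lit_var_cases hl with ⟨_, hv⟩ | ⟨_, hdep⟩
        · exact absurd hv hlV'
        · exact absurd (hdep hxdep) hxV'
      show Lit.eval ((Ψ.abst V').subst s (patch b)) l = false
      rw [lit_eval_congr hkey]
      exact hfalse l hl
    · intro b v hv
      show (Ψ.abst V').subst s (patch b) v = b v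
      rw [subst_not_mem (show v ∉ (Ψ.abst V').exVars from hv)]
      have hvV' : v ∉ V' := fun hvv => hv (Or.inr hvv)
      simp [hpatch, hvV']
    · intro v hv b b' hagree
      show (Ψ.abst V').subst s (patch b) v = (Ψ.abst V').subst s (patch b') v
      have hmem : v ∈ (Ψ.abst V').exVars := hv
      rw [subst_mem hmem, subst_mem hmem]
      refine hs.1 v hmem (patch b) (patch b') ?_
      intro x hx
      obtain ⟨hvV', hxdep, hxV'⟩ := abst_dep_elim hx
      have hbb' : b x = b' x := hagree x hx
      simp [hpatch, hxV', hbb']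
  -- Part 2: any Skolem function of Ψ makes C constantly true
  have star2 : ∀ s, Ψ.IsSkolem s → ∀ a, Clause.eval (Ψ.subst s a) C := by
    intro s hs a
    by_contra hC
    have hfalse : ∀ l ∈ C, Lit.eval (Ψ.subst s a) l = false := by
      intro l hl
      rcases Bool.eq_false_or_eq_true (Lit.eval (Ψ.subst s a) l) with h' | h'
      · exact absurd ⟨l, hl, h'⟩ hC
      · exact h'
    set patch : Assignment V → Assignment V :=
      fun b x => if x ∈ V' then a x else b x with hpatch
    apply h
    refine sat_of_good Ψ C V' (fun b => Ψ.subst s (patch b)) ?_ ?_ ?_ ?_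
    · intro b
      exact hs.2 (patch b)
    · intro b l hl
      have hkey : Ψ.subst s (patch b) l.1 = Ψ.subst s a l.1 := by
        rcases lit_var_cases hl with ⟨hex, hv⟩ | ⟨hex, hdep⟩
        · rw [subst_not_mem hex, subst_not_mem hex]
          simp [hpatch, show l.1 ∈ V' from hv]
        · rw [subst_mem hex, subst_mem hex]
          refine hs.1 l.1 hex (patch b) a ?_
          intro x hx
          simp [hpatch, show x ∈ V' from hdep hx]
      show Lit.eval (Ψ.subst s (patch b)) l = false
      rw [lit_eval_congr hkey]
      exact hfalse l hl
    · intro b v hv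
      show Ψ.subst s (patch b) v = b v
      have hvex : v ∉ Ψ.exVars := fun hx => hv (Or.inl hx)
      have hvV' : v ∉ V' := fun hx => hv (Or.inr hx)
      rw [subst_not_mem hvex]
      simp [hpatch, hvV']
    · intro v hv b b' hagree
      show Ψ.subst s (patch b) v = Ψ.subst s (patch b') v
      by_cases hvex : v ∈ Ψ.exVars
      · rw [subst_mem hvex, subst_mem hvex]
        have hvV' : v ∉ V' := fun hx => hVu v hx hvex
        refine hs.1 v hvex (patch b) (patch b') ?_
        intro x hx
        by_cases hxV' : x ∈ V'
        · simp [hpatch, hxV']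
        · have hbb' : b x = b' x := by
            refine hagree x ?_
            show x ∈ (if v ∈ V' then (∅ : Set V) else Ψ.dep v \ V')
            rw [if_neg hvV']
            exact ⟨hx, hxV'⟩
          simp [hpatch, hxV', hbb']
      · have hvV' : v ∈ V' := hv.resolve_left hvex
        rw [subst_not_mem hvex, subst_not_mem hvex]
        simp [hpatch, hvV']
  constructor
  · -- equivalence of the abstractions
    intro s
    constructor
    · intro hs
      refine ⟨hs.1, ?_⟩
      intro a
      exact ⟨hs.2 a, star1 s hs a⟩
    · intro hs
      exact ⟨hs.1, fun a => (hs.2 a).1⟩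
  · -- equivalence of the original formulas
    intro s
    constructor
    · intro hs
      refine ⟨hs.1, ?_⟩
      intro a
      exact ⟨hs.2 a, star2 s hs a⟩
    · intro hs
      exact ⟨hs.1, fun a => (hs.2 a).1⟩

end DQBFPaper
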